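/- Suppose every OWA vector λ^v is nonnegative and non-increasing, let k, W ∈ ℕ, and suppose |N(c)| ≤ W for every candidate c ∈ C. Let T ⊆ C be a sunflower with |T| ≥ Wk + 1, and let u ∈ T have minimum singleton score sco({u}) among the elements of T. Then for every rational t: there exists S ⊆ C with |S| ≤ k and sco(S) ≥ t if and only if there exists S' ⊆ C \ {u} with |S'| ≤ k and sco(S') ≥ t. (For S' ⊆ C \ {u}, the score of S' in the profile obtained by deleting candidate u equals sco(S').) -/
import Mathlib


open Finset

/-- The score of a committee `S`: each voter `v` (with approval set `A v` and
OWA vector `lam v`) contributes `∑_{j=1}^{|A v ∩ S|} lam v j`. -/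
def sco {C V : Type*} [Fintype V] [DecidableEq C]
    (A : V → Finset C) (lam : V → ℕ → ℚ) (S : Finset C) : ℚ :=
  ∑ v : V, ∑ j ∈ Finset.Icc 1 ((A v ∩ S).card), lam v j

/-- `Nc A c` is the set of voters approving candidate `c`. -/
def Nc {C V : Type*} [Fintype V] [DecidableEq C] (A : V → Finset C) (c : C) : Finset V :=
  Finset.univ.filter fun v => c ∈ A v

lemma lam_le_one {V : Type*} (lam : V → ℕ → ℚ)
    (hmono : ∀ (v : V) (j : ℕ), 1 ≤ j → lam v (j + 1) ≤ lam v j)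
    (v : V) : ∀ m : ℕ, 1 ≤ m → lam v m ≤ lam v 1 := by
  intro m hm
  induction m with
  | zero => omega
  | succ n ih =>
    rcases Nat.lt_or_ge 1 (n + 1) with h | h
    · exact le_trans (hmono v n (by omega)) (ih (by omega))
    · have : n = 0 := by omega
      subst this; exact le_refl _

lemma sco_singleton {C V : Type*} [Fintype V] [DecidableEq C]
    (A : V → Finset C) (lam : V → ℕ → ℚ) (c : C) :
    sco A lam {c} = ∑ v : V, (if c ∈ A v then lam v 1 else 0) := by
  unfold sco
  refine Finset.sum_congr rfl fun v _ => ?_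
  by_cases h : c ∈ A v
  · have h1 : A v ∩ {c} = {c} := by
      ext d; simp only [Finset.mem_inter, Finset.mem_singleton]
      constructor
      · tauto
      · rintro rfl; exact ⟨h, rfl⟩
    simp [h1, h]
  · have h1 : A v ∩ {c} = ∅ := by
      ext d; simp only [Finset.mem_inter, Finset.mem_singleton, Finset.notMem_empty,
        iff_false, not_and]
      rintro hd rfl; exact h hd
    simp [h1, h]

/-- Correctness of the sunflower reduction rule: if all candidate degrees are at most `W`,
`T` is a sunflower of size at least `W*k + 1`, and `u ∈ T` has minimum singleton score in `T`,
then for every threshold `t` there is a committee of size at most `k` with score at least `t`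
iff there is one avoiding `u` (the score of a committee avoiding `u` is the same in the
profile with candidate `u` deleted). -/
theorem stmt_3 {C V : Type*} [Fintype V] [DecidableEq C] [DecidableEq V]
    (A : V → Finset C) (lam : V → ℕ → ℚ)
    (hnonneg : ∀ (v : V) (j : ℕ), 1 ≤ j → 0 ≤ lam v j)
    (hmono : ∀ (v : V) (j : ℕ), 1 ≤ j → lam v (j + 1) ≤ lam v j)
    (k W : ℕ) (hdeg : ∀ c : C, (Nc A c).card ≤ W)
    (T : Finset C) (Co : Finset V)
    (hsun : ∀ x ∈ T, ∀ x' ∈ T, x ≠ x' → Nc A x ∩ Nc A x' = Co)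
    (hT : W * k + 1 ≤ T.card)
    (u : C) (huT : u ∈ T)
    (humin : ∀ x ∈ T, sco A lam {u} ≤ sco A lam {x}) :
    ∀ t : ℚ, (∃ S : Finset C, S.card ≤ k ∧ t ≤ sco A lam S) ↔
      (∃ S' : Finset C, u ∉ S' ∧ S'.card ≤ k ∧ t ≤ sco A lam S') := by
  intro t
  constructor
  · rintro ⟨S, hSk, hts⟩
    by_cases huS : u ∈ S
    · -- main case: u ∈ S, we must replace u by a fresh sunflower element
      by_cases hW : W = 0
      · -- degenerate case: no voter approves anything
        have hAv : ∀ v : V, A v = ∅ := by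
          intro v
          by_contra h
          obtain ⟨c, hc⟩ := Finset.nonempty_iff_ne_empty.mpr h
          have hvc : v ∈ Nc A c := by simp [Nc, hc]
          have := hdeg c
          rw [hW] at this
          have := Finset.card_eq_zero.mp (Nat.le_zero.mp this)
          rw [this] at hvc
          exact absurd hvc (Finset.notMem_empty v)
        refine ⟨∅, Finset.notMem_empty u, by simp, ?_⟩
        have h1 : sco A lam S = 0 := by unfold sco; simp [hAv]
        have h2 : sco A lam ∅ = 0 := by unfold sco; simp [hAv]
        rw [h2, ← h1]; exact hts
      · have hW1 : 1 ≤ W := Nat.one_le_iff_ne_zero.mpr hW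
        -- the set of voters approving some candidate of S outside T
        set U : Finset V := (S \ T).biUnion (Nc A) with hU
        -- bad sunflower elements
        set Bad2 : Finset C := T.filter (fun x => ((Nc A x \ Co) ∩ U).Nonempty) with hBad2def
        have hUcard : U.card ≤ (S \ T).card * W :=
          Finset.card_biUnion_le_card_mul _ _ _ (fun c _ => hdeg c)
        have hBad2card : Bad2.card ≤ U.card := by
          rcases Bad2.eq_empty_or_nonempty with h | h
          · simp [h]
          · obtain ⟨x₀, hx₀⟩ := h
            have hx₀' := (Finset.mem_filter.mp hx₀).2
            obtain ⟨v₀, _⟩ := hx₀'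
            haveI : Nonempty V := ⟨v₀⟩
            refine Finset.card_le_card_of_injOn
              (fun x => if h : ((Nc A x \ Co) ∩ U).Nonempty then h.choose
                        else Classical.arbitrary V) ?_ ?_
            · intro x hx
              have hx' := (Finset.mem_filter.mp hx).2
              simp only [dif_pos hx']
              exact (Finset.mem_inter.mp hx'.choose_spec).2
            · intro x hx y hy hxy
              by_contra hne
              have hx' := (Finset.mem_filter.mp hx).2
              have hy' := (Finset.mem_filter.mp hy).2
              simp only [dif_pos hx', dif_pos hy'] at hxy
              have h1 : hx'.choose ∈ Nc A x \ Co := (Finset.mem_inter.mp hx'.choose_spec).1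
              have h2 : hy'.choose ∈ Nc A y \ Co := (Finset.mem_inter.mp hy'.choose_spec).1
              rw [hxy] at h1
              have hxT : x ∈ T := (Finset.mem_filter.mp hx).1
              have hyT : y ∈ T := (Finset.mem_filter.mp hy).1
              have := hsun x hxT y hyT hne
              have hmem : hy'.choose ∈ Nc A x ∩ Nc A y :=
                Finset.mem_inter.mpr ⟨(Finset.mem_sdiff.mp h1).1, (Finset.mem_sdiff.mp h2).1⟩
              rw [this] at hmem
              exact (Finset.mem_sdiff.mp h1).2 hmem
        -- counting
        have hST1 : 1 ≤ (S ∩ T).card := Finset.card_pos.mpr ⟨u, Finset.mem_inter.mpr ⟨huS, huT⟩⟩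
        have hSsplit : (S ∩ T).card + (S \ T).card = S.card := Finset.card_inter_add_card_sdiff S T
        have hcount : (S ∩ T).card + Bad2.card ≤ W * k := by
          have h1 : Bad2.card ≤ (S \ T).card * W := le_trans hBad2card hUcard
          set a := (S ∩ T).card
          set b := (S \ T).card
          have hab : a + b ≤ k := by omega
          have h2 : a + b * W ≤ W * k := by nlinarith
          omega
        -- find a good element x of T
        have hBadsub : (T ∩ S) ∪ Bad2 ⊆ T := by
          intro x hx
          rcases Finset.mem_union.mp hx with h | h
          · exact (Finset.mem_inter.mp h).1
          · exact (Finset.mem_filter.mp h).1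
        have hBadcard : ((T ∩ S) ∪ Bad2).card < T.card := by
          have h1 : ((T ∩ S) ∪ Bad2).card ≤ (T ∩ S).card + Bad2.card :=
            Finset.card_union_le _ _
          have h2 : (T ∩ S).card = (S ∩ T).card := by rw [Finset.inter_comm]
          omega
        obtain ⟨x, hxT, hxBad⟩ : ∃ x ∈ T, x ∉ (T ∩ S) ∪ Bad2 := by
          by_contra h
          push_neg at h
          exact absurd (Finset.card_le_card h) (Nat.not_le.mpr hBadcard)
        have hxS : x ∉ S := fun h => hxBad (Finset.mem_union_left _ (Finset.mem_inter.mpr ⟨hxT, h⟩))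
        have hxBad2 : ¬ ((Nc A x \ Co) ∩ U).Nonempty := by
          intro h
          exact hxBad (Finset.mem_union_right _ (Finset.mem_filter.mpr ⟨hxT, h⟩))
        have hux : u ≠ x := fun h => hxS (h ▸ huS)
        have hCo : Nc A u ∩ Nc A x = Co := hsun u huT x hxT hux
        -- goodness of x: any voter of the petal of x approves nothing in S \ {u}
        have hgood : ∀ v : V, x ∈ A v → u ∉ A v → A v ∩ S.erase u = ∅ := by
          intro v hxv huv
          by_contra h
          obtain ⟨c, hc⟩ := Finset.nonempty_iff_ne_empty.mpr h
          have hcA : c ∈ A v := (Finset.mem_inter.mp hc).1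
          have hcE := (Finset.mem_inter.mp hc).2
          have hcu : c ≠ u := (Finset.mem_erase.mp hcE).1
          have hcS : c ∈ S := (Finset.mem_erase.mp hcE).2
          have hvNx : v ∈ Nc A x := by simp [Nc, hxv]
          have hvCo : v ∉ Co := by
            intro hco
            have : v ∈ Nc A u := (Finset.mem_inter.mp (hCo ▸ hco)).1
            simp [Nc] at this
            exact huv this
          by_cases hcT : c ∈ T
          · have hxc : x ≠ c := fun h => hxS (h ▸ hcS)
            have := hsun x hxT c hcT hxc
            have hvNc : v ∈ Nc A c := by simp [Nc, hcA]
            have : v ∈ Co := this ▸ Finset.mem_inter.mpr ⟨hvNx, hvNc⟩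
            exact hvCo this
          · apply hxBad2
            refine ⟨v, Finset.mem_inter.mpr ⟨Finset.mem_sdiff.mpr ⟨hvNx, hvCo⟩, ?_⟩⟩
            exact Finset.mem_biUnion.mpr ⟨c, Finset.mem_sdiff.mpr ⟨hcS, hcT⟩, by simp [Nc, hcA]⟩
        -- the replacement committee
        set S' : Finset C := insert x (S.erase u) with hS'def
        have huS' : u ∉ S' := by
          simp only [hS'def, Finset.mem_insert, Finset.mem_erase]
          push_neg
          exact ⟨hux, fun h => absurd rfl h⟩
        have hxSe : x ∉ S.erase u := fun h => hxS (Finset.mem_of_mem_erase h)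
        have hS'k : S'.card ≤ k := by
          have h1 : S'.card = (S.erase u).card + 1 := Finset.card_insert_of_notMem hxSe
          have h2 : (S.erase u).card = S.card - 1 := Finset.card_erase_of_mem huS
          have h3 : 1 ≤ S.card := Finset.card_pos.mpr ⟨u, huS⟩
          omega
        -- score comparison
        have hkey : sco A lam S + sco A lam {x} ≤ sco A lam S' + sco A lam {u} := by
          rw [sco_singleton, sco_singleton]
          unfold sco
          rw [← Finset.sum_add_distrib, ← Finset.sum_add_distrib]
          refine Finset.sum_le_sum fun v _ => ?_
          by_cases huv : u ∈ A v <;> by_cases hxv : x ∈ A v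
          · -- both approved: intersection sizes are equal
            have h1 : A v ∩ S' = insert x ((A v ∩ S).erase u) := by
              ext c
              simp only [hS'def, Finset.mem_inter, Finset.mem_insert, Finset.mem_erase]
              constructor
              · rintro ⟨hcA, hc | ⟨hc1, hc2⟩⟩
                · exact Or.inl hc
                · exact Or.inr ⟨hc1, hcA, hc2⟩
              · rintro (rfl | ⟨hc1, hc2, hc3⟩)
                · exact ⟨hxv, Or.inl rfl⟩
                · exact ⟨hc2, Or.inr ⟨hc1, hc3⟩⟩
            have hxm : x ∉ (A v ∩ S).erase u := by
              simp only [Finset.mem_erase, Finset.mem_inter]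
              tauto
            have hum : u ∈ A v ∩ S := Finset.mem_inter.mpr ⟨huv, huS⟩
            have h2 : (A v ∩ S').card = (A v ∩ S).card := by
              rw [h1, Finset.card_insert_of_notMem hxm, Finset.card_erase_of_mem hum]
              have : 1 ≤ (A v ∩ S).card := Finset.card_pos.mpr ⟨u, hum⟩
              omega
            rw [h2]
            simp [huv, hxv]
          · -- only u approved: the committee loses its last (smallest) weight
            have h1 : A v ∩ S' = (A v ∩ S).erase u := by
              ext c
              simp only [hS'def, Finset.mem_inter, Finset.mem_insert, Finset.mem_erase]
              constructor
              · rintro ⟨hcA, hc | ⟨hc1, hc2⟩⟩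
                · exact absurd (hc ▸ hcA) hxv
                · exact ⟨hc1, hcA, hc2⟩
              · rintro ⟨hc1, hc2, hc3⟩
                exact ⟨hc2, Or.inr ⟨hc1, hc3⟩⟩
            have hum : u ∈ A v ∩ S := Finset.mem_inter.mpr ⟨huv, huS⟩
            have hm1 : 1 ≤ (A v ∩ S).card := Finset.card_pos.mpr ⟨u, hum⟩
            obtain ⟨n, hn⟩ : ∃ n, (A v ∩ S).card = n + 1 := ⟨(A v ∩ S).card - 1, by omega⟩
            have h2 : (A v ∩ S').card = n := by
              rw [h1, Finset.card_erase_of_mem hum, hn]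
              omega
            rw [h2, hn]
            simp only [huv, hxv, if_true, if_false]
            rw [Finset.sum_Icc_succ_top (by omega : 1 ≤ n + 1)]
            have := lam_le_one lam hmono v (n + 1) (by omega)
            linarith
          · -- only x approved: petal voter of x, approves nothing else in S
            have he : A v ∩ S.erase u = ∅ := hgood v hxv huv
            have h0 : A v ∩ S = ∅ := by
              ext c
              simp only [Finset.mem_inter, Finset.notMem_empty, iff_false, not_and]
              intro hcA hcS
              have hcu : c ≠ u := fun h => huv (h ▸ hcA)
              have : c ∈ A v ∩ S.erase u :=
                Finset.mem_inter.mpr ⟨hcA, Finset.mem_erase.mpr ⟨hcu, hcS⟩⟩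
              rw [he] at this
              exact Finset.notMem_empty c this
            have h1 : A v ∩ S' = {x} := by
              ext c
              simp only [hS'def, Finset.mem_inter, Finset.mem_insert, Finset.mem_singleton]
              constructor
              · rintro ⟨hcA, hc | hc⟩
                · exact hc
                · exfalso
                  have : c ∈ A v ∩ S.erase u := Finset.mem_inter.mpr ⟨hcA, hc⟩
                  rw [he] at this
                  exact Finset.notMem_empty c this
              · rintro rfl; exact ⟨hxv, Or.inl rfl⟩
            rw [h0, h1]
            simp [huv, hxv]
          · -- neither approved: nothing changes
            have h1 : A v ∩ S' = A v ∩ S := by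
              ext c
              simp only [hS'def, Finset.mem_inter, Finset.mem_insert, Finset.mem_erase]
              constructor
              · rintro ⟨hcA, hc | ⟨hc1, hc2⟩⟩
                · exact absurd (hc ▸ hcA) hxv
                · exact ⟨hcA, hc2⟩
              · rintro ⟨hcA, hcS⟩
                have : c ≠ u := fun h => huv (h ▸ hcA)
                exact ⟨hcA, Or.inr ⟨this, hcS⟩⟩
            rw [h1]
            simp [huv, hxv]
        have hmin := humin x hxT
        exact ⟨S', huS', hS'k, by linarith⟩
    · exact ⟨S, huS, hSk, hts⟩
  · rintro ⟨S', _, hS'k, hts⟩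
    exact ⟨S', hS'k, hts⟩
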